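/- If ψ is an n×n matrix with trace norm ‖ψ‖₁ ≤ s, then there exist nonnegative vectors (Xᵢ), (Yⱼ) with ‖X‖₂·‖Y‖₂ ≤ s and |ψᵢⱼ| ≤ XᵢYⱼ for all i, j. Explicitly, writing ψ = Σ_k λ_k |x^k⟩⟨y^k| with λ_k ≥ 0, unit vectors x^k, y^k and Σ_k λ_k ≤ s, one may take Xᵢ = (Σ_k λ_k |⟨x^k|i⟩|²)^{1/2} and Yⱼ = (Σ_k λ_k |⟨y^k|j⟩|²)^{1/2}. -/

import Mathlib

open scoped BigOperators Kronecker ComplexOrder Matrix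

/-- The ℓ²→ℓ² operator norm of a square complex matrix. -/
noncomputable def opNorm {n : Type*} [Fintype n] [DecidableEq n] (A : Matrix n n ℂ) : ℝ :=
  ‖Matrix.toEuclideanCLM (𝕜 := ℂ) A‖

/-- The trace norm (Schatten-1 norm) of a square complex matrix. -/
noncomputable def traceNorm {n : Type*} [Fintype n] [DecidableEq n] (A : Matrix n n ℂ) : ℝ :=
  (((Matrix.posSemidef_conjTranspose_mul_self A).1.eigenvectorUnitary.1 *
    Matrix.diagonal (((↑) : ℝ → ℂ) ∘ Real.sqrt ∘ (Matrix.posSemidef_conjTranspose_mul_self A).1.eigenvalues) *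
    (star (Matrix.posSemidef_conjTranspose_mul_self A).1.eigenvectorUnitary : Matrix n n ℂ)).trace).re

lemma unit_sum_abs_sq {n : ℕ} (x : Fin n → ℂ) (hx : star x ⬝ᵥ x = 1) :
    ∑ i, ‖x i‖ ^ 2 = 1 := by
  have : ((∑ i, ‖x i‖ ^ 2 : ℝ) : ℂ) = 1 := by
    push_cast
    rw [← hx]
    simp only [dotProduct, Pi.star_apply]
    refine Finset.sum_congr rfl fun i _ => ?_
    rw [show ((‖x i‖ : ℝ) : ℂ) ^ 2 = ((‖x i‖ ^ 2 : ℝ) : ℂ) by push_cast; ring,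
      ← Complex.normSq_eq_norm_sq, Complex.normSq_eq_conj_mul_self, Complex.star_def]
  exact_mod_cast this

lemma cs_sqrt {m : ℕ} (f g : Fin m → ℝ) (hf : ∀ k, 0 ≤ f k) (hg : ∀ k, 0 ≤ g k) :
    ∑ k, f k * g k ≤ Real.sqrt (∑ k, f k ^ 2) * Real.sqrt (∑ k, g k ^ 2) := by
  have h := Finset.sum_mul_sq_le_sq_mul_sq Finset.univ f g
  have hnn : (0:ℝ) ≤ ∑ k, f k * g k :=
    Finset.sum_nonneg fun k _ => mul_nonneg (hf k) (hg k)
  calc ∑ k, f k * g k = Real.sqrt ((∑ k, f k * g k) ^ 2) := (Real.sqrt_sq hnn).symm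
    _ ≤ Real.sqrt ((∑ k, f k ^ 2) * ∑ k, g k ^ 2) := Real.sqrt_le_sqrt h
    _ = _ := Real.sqrt_mul (Finset.sum_nonneg fun k _ => sq_nonneg _) _

lemma traceNorm_eq_sum_sqrt {n : ℕ} (ψ : Matrix (Fin n) (Fin n) ℂ) :
    traceNorm ψ = ∑ k, Real.sqrt
      ((Matrix.posSemidef_conjTranspose_mul_self ψ).1.eigenvalues k) := by
  set H := Matrix.posSemidef_conjTranspose_mul_self ψ
  rw [traceNorm, Matrix.trace_mul_cycle,
    Unitary.coe_star_mul_self, Matrix.one_mul, Matrix.trace_diagonal]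
  simp

lemma domination_aux {n m : ℕ} (ψ : Matrix (Fin n) (Fin n) ℂ) (s : ℝ)
    (lam : Fin m → ℝ) (x y : Fin m → (Fin n → ℂ))
    (hl : ∀ k, 0 ≤ lam k) (hx : ∀ k, star (x k) ⬝ᵥ x k = 1)
    (hy : ∀ k, star (y k) ⬝ᵥ y k = 1) (hs : (∑ k, lam k) ≤ s)
    (hψ : ψ = ∑ k, (lam k : ℂ) • Matrix.vecMulVec (x k) (star (y k))) :
    (∀ i j, ‖ψ i j‖ ≤
        Real.sqrt (∑ k, lam k * ‖x k i‖ ^ 2) *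
          Real.sqrt (∑ k, lam k * ‖y k j‖ ^ 2)) ∧
      Real.sqrt (∑ i, (Real.sqrt (∑ k, lam k * ‖x k i‖ ^ 2)) ^ 2) *
        Real.sqrt (∑ j, (Real.sqrt (∑ k, lam k * ‖y k j‖ ^ 2)) ^ 2) ≤ s := by
  constructor
  · intro i j
    have h1 : ‖ψ i j‖ ≤
        ∑ k, (Real.sqrt (lam k) * ‖x k i‖) *
          (Real.sqrt (lam k) * ‖y k j‖) := by
      rw [hψ]
      simp only [Matrix.sum_apply, Matrix.smul_apply, Matrix.vecMulVec_apply, smul_eq_mul,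
        Pi.star_apply]
      refine (norm_sum_le _ _).trans (le_of_eq (Finset.sum_congr rfl fun k _ => ?_))
      rw [norm_mul, norm_mul, Complex.norm_real, Real.norm_eq_abs, Complex.star_def, Complex.norm_conj]
      rw [abs_of_nonneg (hl k)]
      conv_lhs => rw [← Real.mul_self_sqrt (hl k)]
      ring
    refine h1.trans ?_
    have h2 := cs_sqrt (fun k => Real.sqrt (lam k) * ‖x k i‖)
      (fun k => Real.sqrt (lam k) * ‖y k j‖)
      (fun k => mul_nonneg (Real.sqrt_nonneg _) (norm_nonneg _))
      (fun k => mul_nonneg (Real.sqrt_nonneg _) (norm_nonneg _))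
    refine h2.trans (le_of_eq ?_)
    congr 1 <;> · congr 1; refine Finset.sum_congr rfl fun k _ => ?_
                  rw [mul_pow, Real.sq_sqrt (hl k)]
  · have key : ∀ (z : Fin m → Fin n → ℂ), (∀ k, star (z k) ⬝ᵥ z k = 1) →
        ∑ i, (Real.sqrt (∑ k, lam k * ‖z k i‖ ^ 2)) ^ 2 = ∑ k, lam k := by
      intro z hz
      have : ∀ i, (Real.sqrt (∑ k, lam k * ‖z k i‖ ^ 2)) ^ 2
          = ∑ k, lam k * ‖z k i‖ ^ 2 := fun i =>
        Real.sq_sqrt (Finset.sum_nonneg fun k _ =>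
          mul_nonneg (hl k) (sq_nonneg _))
      simp_rw [this]
      rw [Finset.sum_comm]
      refine Finset.sum_congr rfl fun k _ => ?_
      rw [← Finset.mul_sum, unit_sum_abs_sq (z k) (hz k), mul_one]
    rw [key x hx, key y hy, Real.mul_self_sqrt (Finset.sum_nonneg fun k _ => hl k)]
    exact hs

/-- a matrix of trace norm at most `s` is entrywise dominated by a rank-one
pattern `XᵢYⱼ` with `‖X‖₂‖Y‖₂ ≤ s`, explicitly from any decomposition `ψ = Σ λ_k |x^k⟩⟨y^k|`. -/
theorem traceNorm_entrywise_domination {n : ℕ} (ψ : Matrix (Fin n) (Fin n) ℂ) (s : ℝ) :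
    (traceNorm ψ ≤ s →
      ∃ X Y : Fin n → ℝ, (∀ i, 0 ≤ X i) ∧ (∀ j, 0 ≤ Y j) ∧
        Real.sqrt (∑ i, X i ^ 2) * Real.sqrt (∑ j, Y j ^ 2) ≤ s ∧
        ∀ i j, ‖ψ i j‖ ≤ X i * Y j) ∧
    (∀ (m : ℕ) (lam : Fin m → ℝ) (x y : Fin m → (Fin n → ℂ)),
      (∀ k, 0 ≤ lam k) → (∀ k, star (x k) ⬝ᵥ x k = 1) → (∀ k, star (y k) ⬝ᵥ y k = 1) →
      (∑ k, lam k) ≤ s →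
      ψ = ∑ k, (lam k : ℂ) • Matrix.vecMulVec (x k) (star (y k)) →
      (∀ i j, ‖ψ i j‖ ≤
          Real.sqrt (∑ k, lam k * ‖x k i‖ ^ 2) *
            Real.sqrt (∑ k, lam k * ‖y k j‖ ^ 2)) ∧
        Real.sqrt (∑ i, (Real.sqrt (∑ k, lam k * ‖x k i‖ ^ 2)) ^ 2) *
          Real.sqrt (∑ j, (Real.sqrt (∑ k, lam k * ‖y k j‖ ^ 2)) ^ 2) ≤ s) := by
  constructor
  · intro hts
    set H := Matrix.posSemidef_conjTranspose_mul_self ψ with hH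
    set d : Fin n → ℝ := H.1.eigenvalues with hd
    set v : Fin n → Fin n → ℂ := fun k => ⇑(H.1.eigenvectorBasis k) with hv
    have hd0 : ∀ k, 0 ≤ d k := fun k => H.eigenvalues_nonneg k
    set lam : Fin n → ℝ := fun k => Real.sqrt (d k) with hlam
    have hlam0 : ∀ k, 0 ≤ lam k := fun k => Real.sqrt_nonneg _
    -- eigen equation
    have hveq : ∀ k, (ψᴴ * ψ) *ᵥ v k = (d k : ℂ) • v k := by
      intro k
      rw [hv, H.1.mulVec_eigenvectorBasis k]
      ext i
      simp [Complex.real_smul]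
      left; rfl
    -- unit eigenvectors
    have hvunit : ∀ k, star (v k) ⬝ᵥ v k = 1 := by
      intro k
      have horth := H.1.eigenvectorBasis.orthonormal
      rw [orthonormal_iff_ite] at horth
      have h1 := horth k k
      rw [if_pos rfl] at h1
      rw [← h1, EuclideanSpace.inner_eq_star_dotProduct]
      exact dotProduct_comm _ _
    -- norms of ψ v k
    have hnormsq : ∀ k, star (ψ *ᵥ v k) ⬝ᵥ (ψ *ᵥ v k) = (d k : ℂ) := by
      intro k
      rw [Matrix.star_mulVec, Matrix.dotProduct_mulVec, Matrix.vecMul_vecMul,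
        ← Matrix.dotProduct_mulVec, hveq k, dotProduct_smul, smul_eq_mul,
        hvunit k, mul_one]
    set u : Fin n → Fin n → ℂ :=
      fun k => if d k = 0 then Pi.single k 1 else (((lam k)⁻¹ : ℝ) : ℂ) • (ψ *ᵥ v k) with hu
    have hlamC : ∀ k, d k ≠ 0 → ((lam k : ℝ) : ℂ) ≠ 0 := by
      intro k h
      simp only [ne_eq, Complex.ofReal_eq_zero, hlam]
      exact Real.sqrt_ne_zero'.mpr (lt_of_le_of_ne (hd0 k) (Ne.symm h))
    have hkey : ∀ k, (lam k : ℂ) • u k = ψ *ᵥ v k := by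
      intro k
      by_cases h : d k = 0
      · have h2 : ψ *ᵥ v k = 0 :=
          dotProduct_star_self_eq_zero.mp (by rw [hnormsq k, h]; simp)
        have hl0 : lam k = 0 := by simp [hlam, h]
        rw [h2, hl0]
        simp
      · rw [hu]
        simp only [if_neg h]
        rw [smul_smul, ← Complex.ofReal_mul, mul_inv_cancel₀, Complex.ofReal_one, one_smul]
        exact fun hc => hlamC k h (by exact_mod_cast hc)
    have huunit : ∀ k, star (u k) ⬝ᵥ u k = 1 := by
      intro k
      by_cases h : d k = 0
      · rw [hu]
        simp only [if_pos h]
        simp [dotProduct, Pi.single_apply, apply_ite]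
      · rw [hu]
        simp only [if_neg h]
        rw [star_smul, smul_dotProduct, dotProduct_smul, hnormsq k]
        rw [Complex.star_def, Complex.conj_ofReal, smul_eq_mul, smul_eq_mul]
        rw [show (d k : ℂ) = ((lam k * lam k : ℝ) : ℂ) by
          rw [Real.mul_self_sqrt (hd0 k)]]
        push_cast
        field_simp
        exact div_self (hlamC k h)
    -- trace norm equals sum of singular values
    have hsum : ∑ k, lam k = traceNorm ψ := by
      rw [traceNorm_eq_sum_sqrt ψ]
    -- the decomposition
    have hdecomp : ψ = ∑ k, (lam k : ℂ) • Matrix.vecMulVec (u k) (star (v k)) := by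
      have h1 : ∀ k, (lam k : ℂ) • Matrix.vecMulVec (u k) (star (v k)) =
          Matrix.vecMulVec (ψ *ᵥ v k) (star (v k)) := by
        intro k
        rw [← hkey k]
        ext i j
        simp only [Matrix.smul_apply, Matrix.vecMulVec_apply, Pi.smul_apply, smul_eq_mul]
        ring
      have h2 : ∀ k, Matrix.vecMulVec (ψ *ᵥ v k) (star (v k)) =
          ψ * Matrix.vecMulVec (v k) (star (v k)) := by
        intro k
        rw [Matrix.vecMulVec_eq (ι := Fin 1), Matrix.vecMulVec_eq (ι := Fin 1), Matrix.replicateCol_mulVec,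
          Matrix.mul_assoc]
      have hUU : (H.1.eigenvectorUnitary : Matrix (Fin n) (Fin n) ℂ) *
          (star H.1.eigenvectorUnitary : Matrix (Fin n) (Fin n) ℂ) = 1 :=
        Matrix.mem_unitaryGroup_iff.mp H.1.eigenvectorUnitary.2
      have h3 : ∑ k, Matrix.vecMulVec (v k) (star (v k)) =
          (H.1.eigenvectorUnitary : Matrix (Fin n) (Fin n) ℂ) *
            (star H.1.eigenvectorUnitary : Matrix (Fin n) (Fin n) ℂ) := by
        ext i j
        rw [Matrix.sum_apply, Matrix.mul_apply]
        refine Finset.sum_congr rfl fun k _ => ?_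
        rw [Matrix.vecMulVec_apply, Matrix.star_apply, Matrix.IsHermitian.eigenvectorUnitary_apply,
          Matrix.IsHermitian.eigenvectorUnitary_apply]
        rfl
      calc ψ = ψ * 1 := (Matrix.mul_one ψ).symm
        _ = ψ * ∑ k, Matrix.vecMulVec (v k) (star (v k)) := by rw [h3, hUU]
        _ = ∑ k, (lam k : ℂ) • Matrix.vecMulVec (u k) (star (v k)) := by
            rw [Matrix.mul_sum]
            exact Finset.sum_congr rfl fun k _ => by rw [h1 k, h2 k]
    obtain ⟨hdom, hnorm⟩ := domination_aux ψ s lam u v hlam0 huunit hvunit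
      (hsum ▸ hts) hdecomp
    exact ⟨fun i => Real.sqrt (∑ k, lam k * ‖u k i‖ ^ 2),
      fun j => Real.sqrt (∑ k, lam k * ‖v k j‖ ^ 2),
      fun i => Real.sqrt_nonneg _, fun j => Real.sqrt_nonneg _, hnorm, hdom⟩
  · intro m lam x y hl hx hy hs hψ
    exact domination_aux ψ s lam x y hl hx hy hs hψ
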